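/- Let (X,d) be a compact metric space and T : X → X a continuous map satisfying the Closing Lemma and having a point with dense orbit. Let (f_n)_{n≥1} be a sequence of continuous functions that is almost additive with respect to T (with some constant C > 0) and has bounded variation, and let f : X → ℝ be a continuous function such that the additive sequence (S_n f)_{n≥1} has bounded variation. Then lim_{n→∞} (1/n)‖f_n − S_n f‖_∞ = 0 if and only if sup_{n≥1} ‖f_n − S_n f‖_∞ < ∞. Moreover, if f : X → ℝ is continuous and (S_n f)_{n≥1} does not have bounded variation, then sup_{n≥1} ‖f_n − S_n f‖_∞ = ∞. -/

import Mathlib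

open Filter MeasureTheory Topology

/-- Birkhoff sum `S_n f = ∑_{k=0}^{n-1} f ∘ T^k`. -/
noncomputable def birkhoff {X : Type*} (T : X → X) (f : X → ℝ) (n : ℕ) (x : X) : ℝ :=
  ∑ k ∈ Finset.range n, f (T^[k] x)

lemma birkhoff_add {X : Type*} (T : X → X) (f : X → ℝ) (n m : ℕ) (x : X) :
    birkhoff T f (n + m) x = birkhoff T f n x + birkhoff T f m (T^[n] x) := by
  unfold birkhoff
  rw [Finset.sum_range_add]
  congr 1
  refine Finset.sum_congr rfl fun k _ => ?_
  rw [← Function.iterate_add_apply, Nat.add_comm]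

lemma aux_hard {X : Type*} [MetricSpace X] [CompactSpace X]
    (T : X → X) (hT : Continuous T)
    (hClosing : ∀ ε > (0:ℝ), ∃ δ > (0:ℝ), ∀ (x : X) (n : ℕ), 1 ≤ n →
      dist (T^[n] x) x < δ →
      ∃ y : X, T^[n] y = y ∧ ∀ k < n, dist (T^[k] x) (T^[k] y) < ε)
    (z : X) (hz : Dense (Set.range fun n : ℕ => T^[n] z))
    (G : ℕ → X → ℝ) (hGc : ∀ n, Continuous (G n))
    (C : ℝ) (hC : 0 < C)
    (hAA : ∀ (x : X) (n m : ℕ), 1 ≤ n → 1 ≤ m →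
      |G (n + m) x - G n x - G m (T^[n] x)| ≤ C)
    (ε1 M0 : ℝ) (hε1 : 0 < ε1) (hM0 : 0 < M0)
    (hBV : ∀ (n : ℕ), 1 ≤ n → ∀ x y : X,
      (∀ k < n, dist (T^[k] x) (T^[k] y) < ε1) → |G n x - G n y| ≤ M0)
    (htend : Tendsto (fun n : ℕ => (⨆ x : X, |G n x|) / (n : ℝ)) atTop (nhds 0)) :
    ∃ K : ℝ, ∀ (n : ℕ), 1 ≤ n → ∀ x : X, |G n x| ≤ K := by
  classical
  set S : ℕ → ℝ := fun n => ⨆ x : X, |G n x| with hS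
  have hbdd : ∀ n, BddAbove (Set.range fun x : X => |G n x|) := by
    intro n
    have := isCompact_univ.bddAbove_image ((hGc n).abs.continuousOn)
    rwa [Set.image_univ] at this
  have hle : ∀ n (x : X), |G n x| ≤ S n := fun n x => le_ciSup (hbdd n) x
  -- Step A: periodic orbit bound
  have hper : ∀ p, 1 ≤ p → ∀ y : X, T^[p] y = y → |G p y| ≤ C := by
    intro p hp y hy
    have hfix : ∀ j : ℕ, T^[p * j] y = y := by
      intro j
      rw [Function.iterate_mul]
      exact Function.iterate_fixed hy j
    have key : ∀ j : ℕ, |G (p * (j+1)) y - ((j:ℝ)+1) * G p y| ≤ (j:ℝ) * C := by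
      intro j
      induction j with
      | zero => simp
      | succ j ih =>
        have hpos : 1 ≤ p * (j+1) := Nat.mul_pos hp (Nat.succ_pos j)
        have h1 := hAA y (p*(j+1)) p hpos hp
        rw [hfix (j+1)] at h1
        have e : p*(j+1) + p = p*(j+2) := by ring
        rw [e] at h1
        rw [abs_le] at h1 ih ⊢
        constructor <;> push_cast <;> [nlinarith [hC.le]; nlinarith [hC.le]]
    have hbj : ∀ j : ℕ, |G p y| - C ≤ S (p*(j+1)) / ((j:ℝ)+1) := by
      intro j
      have h2 := key j
      have h3 := hle (p*(j+1)) y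
      rw [abs_le] at h2
      have h4 : ((j:ℝ)+1) * |G p y| ≤ S (p*(j+1)) + (j:ℝ)*C := by
        rcases abs_cases (G p y) with ⟨he, _⟩ | ⟨he, _⟩ <;> rw [he] <;>
          rcases abs_cases (G (p*(j+1)) y) with ⟨he2, _⟩ | ⟨he2, _⟩ <;> nlinarith
      rw [le_div_iff₀ (by positivity)]
      nlinarith [hC.le, (Nat.cast_nonneg j : (0:ℝ) ≤ j)]
    have hφ : Tendsto (fun j : ℕ => p * (j+1)) atTop atTop := by
      apply tendsto_atTop_mono (f := fun j => j) _ tendsto_id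
      intro j
      calc j ≤ j + 1 := Nat.le_succ j
        _ ≤ p * (j+1) := Nat.le_mul_of_pos_left _ hp
    have ha : Tendsto (fun j : ℕ => S (p*(j+1)) / ((j:ℝ)+1)) atTop (nhds 0) := by
      have h5 := (htend.comp hφ).const_mul (p:ℝ)
      rw [mul_zero] at h5
      have he : (fun j : ℕ => S (p*(j+1)) / ((j:ℝ)+1)) =
          (fun j : ℕ => (p:ℝ) * (((fun n : ℕ => (⨆ x : X, |G n x|) / (n : ℝ)) ∘
            (fun j : ℕ => p * (j+1))) j)) := by
        funext j
        have hp0 : ((p:ℝ)) ≠ 0 := by positivity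
        simp only [Function.comp, hS]
        push_cast
        field_simp
      rw [he]
      exact h5
    have := ge_of_tendsto ha (Eventually.of_forall hbj)
    linarith
  -- closing lemma constant
  obtain ⟨δ, hδ0, hδ⟩ := hClosing ε1 hε1
  -- finite cover by δ/2 balls
  obtain ⟨t, ht⟩ := isCompact_univ.elim_finite_subcover
    (fun c : X => Metric.ball c (δ/2)) (fun c => Metric.isOpen_ball)
    (fun x _ => Set.mem_iUnion.mpr ⟨x, Metric.mem_ball_self (by positivity)⟩)
  have hidx : ∀ m : ℕ, ∃ c, c ∈ t ∧ dist (T^[m] z) c < δ/2 := by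
    intro m
    have := ht (Set.mem_univ (T^[m] z))
    simp only [Set.mem_iUnion, Metric.mem_ball, exists_prop] at this
    exact this
  set idx : ℕ → X := fun m => (hidx m).choose with hidxdef
  have idx_mem : ∀ m, idx m ∈ t := fun m => (hidx m).choose_spec.1
  have idx_dist : ∀ m, dist (T^[m] z) (idx m) < δ/2 := fun m => (hidx m).choose_spec.2
  -- the potential along the dense orbit
  set h : ℕ → ℝ := fun m => if m = 0 then 0 else G m z with hh
  have hstep : ∀ m n : ℕ, 1 ≤ n → |h (m + n) - h m - G n (T^[m] z)| ≤ C := by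
    intro m n hn
    rcases Nat.eq_zero_or_pos m with rfl | hm
    · have e1 : h (0 + n) = G n z := by
        simp only [hh, Nat.zero_add]
        rw [if_neg (by omega)]
      have e2 : h 0 = 0 := by simp [hh]
      rw [e1, e2, Function.iterate_zero]
      simp only [id_eq, sub_zero, sub_self, abs_zero]
      exact hC.le
    · have := hAA z m n hm hn
      simp only [hh]
      rw [if_neg (by omega), if_neg (by omega)]
      exact this
  have hsame : ∀ a b : ℕ, a < b → dist (T^[a] z) (T^[b] z) < δ →
      |G (b - a) (T^[a] z)| ≤ C + M0 := by
    intro a b hab hd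
    have h1 : 1 ≤ b - a := by omega
    have h2 : T^[b - a] (T^[a] z) = T^[b] z := by
      rw [← Function.iterate_add_apply]
      congr 1
      omega
    obtain ⟨y, hy, hcl⟩ := hδ (T^[a] z) (b-a) h1 (by rw [h2, dist_comm]; exact hd)
    have hb1 := hBV (b-a) h1 (T^[a] z) y hcl
    have hb2 := hper (b-a) h1 y hy
    have h3 : |G (b-a) (T^[a] z)| - |G (b-a) y| ≤ |G (b-a) (T^[a] z) - G (b-a) y| :=
      abs_sub_abs_le_abs_sub _ _
    linarith
  -- bound on one-step values
  have hB : ∀ x : X, |G 1 x| ≤ S 1 := hle 1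
  have hB0 : 0 ≤ S 1 := (abs_nonneg _).trans (hB z)
  set K0 : ℝ := 2*C + M0 + (C + S 1) with hK0def
  have hK00 : 0 ≤ K0 := by positivity
  -- main combinatorial lemma
  have hmain : ∀ N : ℕ, ∀ V : Finset X, V.card ≤ N → ∀ a b : ℕ, a ≤ b →
      (∀ m, a ≤ m → m < b → idx m ∈ V) → |h b - h a| ≤ N * K0 := by
    intro N
    induction N with
    | zero =>
      intro V hV a b hab hm
      rcases eq_or_lt_of_le hab with rfl | hlt
      · simp
      · have hVe : V = ∅ := Finset.card_eq_zero.mp (Nat.le_zero.mp hV)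
        exact absurd (hm a le_rfl hlt) (by simp [hVe])
    | succ N ih =>
      intro V hV a b hab hm
      rcases eq_or_lt_of_le hab with rfl | hlt
      · rw [sub_self, abs_zero]
        positivity
      · have haV : idx a ∈ V := hm a le_rfl hlt
        set P := (Finset.Ico a b).filter (fun m => idx m = idx a) with hP
        have haP : a ∈ P := by
          simp [hP, Finset.mem_filter, Finset.mem_Ico, hlt]
        set tm := P.max' ⟨a, haP⟩ with htm
        have htP : tm ∈ P := P.max'_mem _
        rw [hP, Finset.mem_filter, Finset.mem_Ico] at htP
        obtain ⟨⟨hat, htb⟩, hidxt⟩ := htP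
        have hIH : |h b - h (tm+1)| ≤ N * K0 := by
          apply ih (V.erase (idx a))
          · rw [Finset.card_erase_of_mem haV]
            omega
          · omega
          · intro m hm1 hm2
            refine Finset.mem_erase.mpr ⟨?_, hm m (by omega) hm2⟩
            intro hcon
            have : m ∈ P := by
              rw [hP, Finset.mem_filter, Finset.mem_Ico]
              exact ⟨⟨by omega, hm2⟩, hcon⟩
            have := P.le_max' m this
            omega
        have p1 : |h tm - h a| ≤ 2*C + M0 := by
          rcases eq_or_lt_of_le hat with heq | hlt2
          · rw [← heq, sub_self, abs_zero]
            linarith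
          · have hd : dist (T^[a] z) (T^[tm] z) < δ := by
              have d1 := idx_dist a
              have d2 := idx_dist tm
              rw [hidxt] at d2
              calc dist (T^[a] z) (T^[tm] z)
                  ≤ dist (T^[a] z) (idx a) + dist (T^[tm] z) (idx a) := dist_triangle_right _ _ _
                _ < δ/2 + δ/2 := add_lt_add d1 d2
                _ = δ := by ring
            have h3 := hsame a tm hlt2 hd
            have h4 := hstep a (tm - a) (by omega)
            rw [show a + (tm - a) = tm from by omega] at h4
            rw [abs_le] at h3 h4 ⊢
            constructor <;> linarith
        have p2 : |h (tm+1) - h tm| ≤ C + S 1 := by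
          have h4 := hstep tm 1 le_rfl
          have h5 := hB (T^[tm] z)
          rw [abs_le] at h4 h5 ⊢
          constructor <;> linarith
        have : |h b - h a| ≤ |h b - h (tm+1)| + |h (tm+1) - h tm| + |h tm - h a| := by
          have := abs_add_le (h b - h (tm+1)) (h (tm+1) - h tm)
          have := abs_add_le (h b - h (tm+1) + (h (tm+1) - h tm)) (h tm - h a)
          have e : h b - h (tm+1) + (h (tm+1) - h tm) + (h tm - h a) = h b - h a := by ring
          rw [e] at this
          linarith [abs_add_le (h b - h (tm+1)) (h (tm+1) - h tm)]
        calc |h b - h a| ≤ |h b - h (tm+1)| + |h (tm+1) - h tm| + |h tm - h a| := this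
          _ ≤ N * K0 + (C + S 1) + (2*C + M0) := by linarith [hIH, p1, p2]
          _ = (N+1 : ℕ) * K0 := by push_cast; rw [hK0def]; ring
  have hglob : ∀ a b : ℕ, a ≤ b → |h b - h a| ≤ (t.card : ℝ) * K0 :=
    fun a b hab => hmain t.card t le_rfl a b hab (fun m _ _ => idx_mem m)
  -- final bound
  refine ⟨M0 + ((t.card : ℝ) * K0 + C), fun n hn x => ?_⟩
  have hcont : ∀ k : ℕ, ∃ r > 0, ∀ u : X, dist u x < r → dist (T^[k] u) (T^[k] x) < ε1 :=
    fun k => Metric.continuous_iff.mp (hT.iterate k) x ε1 hε1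
  choose ρ hρ0 hρ using hcont
  have hne : (Finset.range n).Nonempty := Finset.nonempty_range_iff.mpr (by omega)
  set r := (Finset.range n).inf' hne ρ with hr
  have hr0 : 0 < r := (Finset.lt_inf'_iff hne).mpr fun k _ => hρ0 k
  obtain ⟨w, hw, hwd⟩ := hz.exists_dist_lt x hr0
  obtain ⟨m, rfl⟩ := hw
  have hcl : ∀ k < n, dist (T^[k] (T^[m] z)) (T^[k] x) < ε1 := by
    intro k hk
    refine hρ k _ ?_
    rw [dist_comm] at hwd
    exact hwd.trans_le (Finset.inf'_le _ (Finset.mem_range.mpr hk))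
  have h1 := hBV n hn (T^[m] z) x hcl
  have h2 := hstep m n hn
  have h3 := hglob m (m+n) (Nat.le_add_right _ _)
  rw [abs_le] at h1 h2 h3 ⊢
  constructor <;> [linarith; linarith]

theorem statement1 {X : Type*} [MetricSpace X] [CompactSpace X]
    (T : X → X) (hT : Continuous T)
    (hClosing : ∀ ε > (0 : ℝ), ∃ δ > (0 : ℝ), ∀ (x : X) (n : ℕ), 1 ≤ n →
      dist (T^[n] x) x < δ →
      ∃ y : X, T^[n] y = y ∧ ∀ k < n, dist (T^[k] x) (T^[k] y) < ε)
    (hDense : ∃ x : X, Dense (Set.range fun n : ℕ => T^[n] x))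
    (F : ℕ → X → ℝ) (hF : ∀ n, Continuous (F n))
    (C : ℝ) (hC : 0 < C)
    (hAA : ∀ (x : X) (n m : ℕ), 1 ≤ n → 1 ≤ m →
      -C + F n x + F m (T^[n] x) ≤ F (n + m) x ∧
        F (n + m) x ≤ F n x + F m (T^[n] x) + C)
    (hBV : ∃ ε > (0 : ℝ), ∃ M > (0 : ℝ), ∀ (n : ℕ), 1 ≤ n → ∀ x y : X,
      (∀ k < n, dist (T^[k] x) (T^[k] y) < ε) → |F n x - F n y| ≤ M)
    (f : X → ℝ) (hf : Continuous f) :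
    ((∃ ε > (0 : ℝ), ∃ M > (0 : ℝ), ∀ (n : ℕ), 1 ≤ n → ∀ x y : X,
        (∀ k < n, dist (T^[k] x) (T^[k] y) < ε) →
          |birkhoff T f n x - birkhoff T f n y| ≤ M) →
      (Tendsto (fun n : ℕ => (⨆ x : X, |F n x - birkhoff T f n x|) / (n : ℝ))
          atTop (nhds 0) ↔
        ∃ K : ℝ, ∀ (n : ℕ), 1 ≤ n → ∀ x : X, |F n x - birkhoff T f n x| ≤ K)) ∧
    ((¬ ∃ ε > (0 : ℝ), ∃ M > (0 : ℝ), ∀ (n : ℕ), 1 ≤ n → ∀ x y : X,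
        (∀ k < n, dist (T^[k] x) (T^[k] y) < ε) →
          |birkhoff T f n x - birkhoff T f n y| ≤ M) →
      ¬ ∃ K : ℝ, ∀ (n : ℕ), 1 ≤ n → ∀ x : X, |F n x - birkhoff T f n x| ≤ K) := by
  classical
  obtain ⟨z, hz⟩ := hDense
  haveI : Nonempty X := ⟨z⟩
  have hGc : ∀ n, Continuous fun x : X => F n x - birkhoff T f n x := by
    intro n
    refine (hF n).sub ?_
    unfold birkhoff
    exact continuous_finset_sum _ fun k _ => hf.comp (hT.iterate k)
  have hAAG : ∀ (x : X) (n m : ℕ), 1 ≤ n → 1 ≤ m →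
      |(F (n+m) x - birkhoff T f (n+m) x) - (F n x - birkhoff T f n x) -
        (F m (T^[n] x) - birkhoff T f m (T^[n] x))| ≤ C := by
    intro x n m hn hm
    obtain ⟨h1, h2⟩ := hAA x n m hn hm
    have h3 := birkhoff_add T f n m x
    rw [abs_le]
    constructor <;> linarith
  constructor
  · rintro ⟨εf, hεf, Mf, hMf, hBVf⟩
    obtain ⟨εF, hεF, MF, hMF, hBVF⟩ := hBV
    constructor
    · intro htend
      have hBVG : ∀ (n : ℕ), 1 ≤ n → ∀ x y : X,
          (∀ k < n, dist (T^[k] x) (T^[k] y) < min εF εf) →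
          |(F n x - birkhoff T f n x) - (F n y - birkhoff T f n y)| ≤ MF + Mf := by
        intro n hn x y hd
        have b1 := hBVF n hn x y (fun k hk => (hd k hk).trans_le (min_le_left _ _))
        have b2 := hBVf n hn x y (fun k hk => (hd k hk).trans_le (min_le_right _ _))
        rw [abs_le] at b1 b2 ⊢
        constructor <;> linarith
      exact aux_hard T hT hClosing z hz (fun n x => F n x - birkhoff T f n x) hGc C hC
        hAAG (min εF εf) (MF + Mf) (lt_min hεF hεf) (by linarith) hBVG htend
    · rintro ⟨K, hK⟩
      have hbdd : ∀ n : ℕ, BddAbove (Set.range fun x : X => |F n x - birkhoff T f n x|) := by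
        intro n
        have := isCompact_univ.bddAbove_image ((hGc n).abs.continuousOn)
        rwa [Set.image_univ] at this
      apply squeeze_zero' (g := fun n : ℕ => (max K 0) / (n : ℝ))
      · filter_upwards [eventually_ge_atTop 1] with n hn
        have h0 : 0 ≤ ⨆ x : X, |F n x - birkhoff T f n x| :=
          (abs_nonneg _).trans (le_ciSup (hbdd n) z)
        positivity
      · filter_upwards [eventually_ge_atTop 1] with n hn
        have h1 : (⨆ x : X, |F n x - birkhoff T f n x|) ≤ max K 0 :=
          ciSup_le fun x => (hK n hn x).trans (le_max_left _ _)
        have h2 : (0:ℝ) < n := by exact_mod_cast hn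
        gcongr
      · exact tendsto_const_div_atTop_nhds_zero_nat _
  · rintro hnBV ⟨K, hK⟩
    apply hnBV
    obtain ⟨εF, hεF, MF, hMF, hBVF⟩ := hBV
    refine ⟨εF, hεF, MF + 2 * max K 0,
      by have := le_max_right K 0; linarith, ?_⟩
    intro n hn x y hd
    have b1 := hBVF n hn x y hd
    have h1 := (hK n hn x).trans (le_max_left K 0)
    have h2 := (hK n hn y).trans (le_max_left K 0)
    rw [abs_le] at b1 h1 h2 ⊢
    constructor <;> linarith
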